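/- For n ≥ 2 and each τ ≥ n, define G(τ) as the unique root x ≥ 1 of the polynomial x^{n−1} + x^{n−2} + … + x + 1 − τ. Then max_{τ ≥ n} τ·(2 − G(τ)) = max_{t ∈ (1,2)} (1 + t + t² + … + t^{n−1})(2 − t), and this maximum is at least (2/(n−1))·(2ⁿ(1 − 1/(n+1))ⁿ − 1). -/

import Mathlib

open Finset

theorem stmt_13 (n : ℕ) (hn : 2 ≤ n) (G : ℝ → ℝ)
    (hG : ∀ τ : ℝ, (n : ℝ) ≤ τ → 1 ≤ G τ ∧ (∑ i ∈ Finset.range n, (G τ) ^ i) = τ) :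
    sSup ((fun τ : ℝ => τ * (2 - G τ)) '' Set.Ici (n : ℝ)) =
      sSup ((fun t : ℝ => (∑ i ∈ Finset.range n, t ^ i) * (2 - t)) '' Set.Ioo 1 2) ∧
    (2 / ((n : ℝ) - 1)) * (2 ^ n * (1 - 1 / ((n : ℝ) + 1)) ^ n - 1) ≤
      sSup ((fun τ : ℝ => τ * (2 - G τ)) '' Set.Ici (n : ℝ)) := by
  have hn1 : 1 < n := hn
  set S : ℝ → ℝ := fun t => ∑ i ∈ Finset.range n, t ^ i with hSdef
  set f : ℝ → ℝ := fun t => S t * (2 - t) with hfdef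


  -- strict monotonicity of S on [1, ∞)
  have hmono : ∀ a b : ℝ, 1 ≤ a → a < b → S a < S b := by
    intro a b ha hab
    apply Finset.sum_lt_sum
    · intro i _
      exact pow_le_pow_left₀ (by linarith) hab.le i
    · exact ⟨1, Finset.mem_range.mpr hn1, by simpa using hab⟩
  have hS1 : S 1 = (n : ℝ) := by simp [hSdef]
  have hf1 : f 1 = (n : ℝ) := by norm_num [hfdef, hS1]
  have hSnonneg : ∀ t : ℝ, 1 ≤ t → 0 ≤ S t := by
    intro t ht
    exact Finset.sum_nonneg fun i _ => pow_nonneg (by linarith) i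
  -- image set equality
  have himg : (fun τ : ℝ => τ * (2 - G τ)) '' Set.Ici (n : ℝ) = f '' Set.Ici 1 := by
    ext y
    constructor
    · rintro ⟨τ, hτ, rfl⟩
      obtain ⟨h1, h2⟩ := hG τ hτ
      exact ⟨G τ, h1, by simp only [hfdef]; rw [show S (G τ) = τ from h2]⟩
    · rintro ⟨t, ht, rfl⟩
      have hSt : (n : ℝ) ≤ S t := by
        rcases eq_or_lt_of_le (Set.mem_Ici.mp ht) with h | h
        · rw [← h, hS1]
        · rw [← hS1]; exact (hmono 1 t le_rfl h).le
      obtain ⟨h1, h2⟩ := hG (S t) hSt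
      have hGt : G (S t) = t := by
        by_contra hne
        rcases lt_or_gt_of_ne hne with h | h
        · have := hmono _ _ h1 h
          rw [show S (G (S t)) = S t from h2] at this
          exact lt_irrefl _ this
        · have := hmono _ _ ht h
          rw [show S (G (S t)) = S t from h2] at this
          exact lt_irrefl _ this
      exact ⟨S t, hSt, by show S t * (2 - G (S t)) = f t; rw [hGt, hfdef]⟩
  rw [himg]
  -- boundedness
  have hub : ∀ t : ℝ, 1 ≤ t → f t ≤ (n : ℝ) * 2 ^ n := by
    intro t ht
    rcases le_or_gt t 2 with h2 | h2
    · have hS2 : S t ≤ (n : ℝ) * 2 ^ n := by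
        calc S t ≤ ∑ _i ∈ Finset.range n, (2:ℝ) ^ n := by
              apply Finset.sum_le_sum
              intro i hi
              calc t ^ i ≤ 2 ^ i := pow_le_pow_left₀ (by linarith) h2 i
                _ ≤ 2 ^ n := pow_le_pow_right₀ (by norm_num) (Finset.mem_range.mp hi).le
          _ = (n : ℝ) * 2 ^ n := by simp [mul_comm]
      calc f t ≤ S t * 1 := by
            apply mul_le_mul_of_nonneg_left (by linarith) (hSnonneg t ht)
        _ = S t := mul_one _
        _ ≤ _ := hS2
    · have : f t ≤ 0 := mul_nonpos_of_nonneg_of_nonpos (hSnonneg t ht) (by linarith)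
      have hpos : (0:ℝ) ≤ (n : ℝ) * 2 ^ n := by positivity
      linarith
  have hBddA : BddAbove (f '' Set.Ici 1) := by
    refine ⟨(n : ℝ) * 2 ^ n, ?_⟩
    rintro y ⟨t, ht, rfl⟩
    exact hub t ht
  have hBddB : BddAbove (f '' Set.Ioo 1 2) :=
    BddAbove.mono (Set.image_mono (f := f) (fun t ht => ht.1.le)) hBddA
  -- continuity / limit: n ≤ sSup B
  have hcont : Continuous f := by
    apply Continuous.mul
    · exact continuous_finset_sum _ fun i _ => continuous_pow i
    · exact continuous_const.sub continuous_id
  have hn_le : (n : ℝ) ≤ sSup (f '' Set.Ioo 1 2) := by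
    have htend : Filter.Tendsto f (nhdsWithin 1 (Set.Ioi 1)) (nhds (n : ℝ)) := by
      have h := (hcont.tendsto 1).mono_left (nhdsWithin_le_nhds (s := Set.Ioi 1))
      rwa [hf1] at h
    apply le_of_tendsto htend
    filter_upwards [Ioo_mem_nhdsGT_of_mem (Set.left_mem_Ico.mpr (by norm_num : (1:ℝ) < 2))] with t ht
    exact le_csSup hBddB ⟨t, ht, rfl⟩
  -- sup equality
  have heq : sSup (f '' Set.Ici 1) = sSup (f '' Set.Ioo 1 2) := by
    apply le_antisymm
    · refine csSup_le ⟨f 1, ⟨1, Set.self_mem_Ici, rfl⟩⟩ ?_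
      rintro y ⟨t, ht, rfl⟩
      rcases lt_or_ge t 2 with h2 | h2
      · rcases eq_or_lt_of_le (Set.mem_Ici.mp ht) with h1 | h1
        · rw [← h1, hf1]; exact hn_le
        · exact le_csSup hBddB ⟨t, ⟨h1, h2⟩, rfl⟩
      · have h0 : f t ≤ 0 := mul_nonpos_of_nonneg_of_nonpos (hSnonneg t ht) (by linarith)
        have : (0:ℝ) ≤ n := Nat.cast_nonneg n
        linarith
    · exact csSup_le_csSup hBddA ⟨f (3/2), 3/2, by norm_num, rfl⟩
        (Set.image_mono (f := f) (fun t ht => ht.1.le))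
  refine ⟨heq, ?_⟩
  -- lower bound via t* = 2n/(n+1)
  have hc : (2:ℝ) ≤ (n : ℝ) := by exact_mod_cast hn
  set c : ℝ := (n : ℝ) with hcdef
  have hc1 : c + 1 ≠ 0 := by positivity
  have hcm1 : c - 1 ≠ 0 := by intro h; nlinarith
  set t₀ : ℝ := 2 * c / (c + 1) with ht0def
  have ht1 : 1 < t₀ := by
    rw [ht0def, lt_div_iff₀ (by positivity)]
    linarith
  have ht2 : t₀ < 2 := by
    rw [ht0def, div_lt_iff₀ (by positivity)]
    linarith
  have hft : f t₀ = 2 / (c - 1) * (2 ^ n * (1 - 1 / (c + 1)) ^ n - 1) := by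
    have hne : t₀ ≠ 1 := ne_of_gt ht1
    have hgeom : S t₀ = (t₀ ^ n - 1) / (t₀ - 1) := geom_sum_eq hne n
    have h1 : (1:ℝ) - 1 / (c + 1) = c / (c + 1) := by field_simp; ring
    have h2 : (2:ℝ) ^ n * (c / (c + 1)) ^ n = t₀ ^ n := by
      rw [ht0def, mul_div_assoc, mul_pow]
    rw [hfdef]
    simp only
    rw [hgeom, h1, h2]
    have hd1 : t₀ - 1 = (c - 1) / (c + 1) := by rw [ht0def]; field_simp; ring
    have hd2 : 2 - t₀ = 2 / (c + 1) := by rw [ht0def]; field_simp; ring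
    rw [hd1, hd2]
    field_simp
  rw [← hft]
  exact le_csSup hBddA ⟨t₀, ht1.le, rfl⟩
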